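/- arXiv:2406.15772 — 3 statements merged into one kernel-verified Lean document; each statement's English description precedes it below -/
import Mathlib

section
/- Let X and Y be metric spaces, X × Y with the max metric. If A ⊆ X is clopen and Cent_Y(B) = ∅ for B ⊆ Y, then Cent_{X×Y}(A × B) = ∅. -/
open EMetric Set ENNReal

/-- The center of a subset `A`: points of `A` at maximal distance from the boundary. -/
def cent {X : Type*} [MetricSpace X] (A : Set X) : Set X :=
  {a ∈ A | ∀ b ∈ A, EMetric.infEdist b (frontier A) ≤ EMetric.infEdist a (frontier A)}

/-- The radius of a subset `A`: the distance between its center and its boundary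
(`∞` when the center is empty or the boundary is empty). -/
noncomputable def rad {X : Type*} [MetricSpace X] (A : Set X) : ℝ≥0∞ :=
  ⨅ a ∈ cent A, EMetric.infEdist a (frontier A)

theorem cent_prod_empty_of_clopen {X Y : Type*} [MetricSpace X] [MetricSpace Y]
    (A : Set X) (B : Set Y) (hA : IsClopen A) (hB : cent B = ∅) :
    cent (A ×ˢ B) = ∅ := by
  have hfront : frontier (A ×ˢ B) = A ×ˢ frontier B := by
    rw [frontier_prod_eq, hA.frontier_eq, hA.isClosed.closure_eq, empty_prod, union_empty]
  have key : ∀ a ∈ A, ∀ b : Y,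
      EMetric.infEdist (a, b) (A ×ˢ frontier B) = EMetric.infEdist b (frontier B) := by
    intro a ha b
    apply le_antisymm
    · rw [EMetric.infEdist]
      refine le_iInf₂ fun y hy => ?_
      calc EMetric.infEdist (a, b) (A ×ˢ frontier B) ≤ edist (a, b) (a, y) :=
            EMetric.infEdist_le_edist_of_mem ⟨ha, hy⟩
        _ = edist b y := by simp [Prod.edist_eq]
    · refine EMetric.le_infEdist.2 ?_
      rintro ⟨x, y⟩ ⟨hx, hy⟩
      calc EMetric.infEdist b (frontier B) ≤ edist b y :=
            EMetric.infEdist_le_edist_of_mem hy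
        _ ≤ edist (a, b) (x, y) := le_max_right _ _
  ext ⟨a, b⟩
  simp only [mem_empty_iff_false, iff_false]
  rintro ⟨⟨ha, hb⟩, hmax⟩
  have : b ∈ cent B := by
    refine ⟨hb, fun y hy => ?_⟩
    have := hmax (a, y) ⟨ha, hy⟩
    rwa [hfront, key a ha, key a ha] at this
  rw [hB] at this
  exact this
end

section
/- Let X and Y be metric spaces, X × Y with the max metric. If Cent_X(A) = ∅ and Cent_Y(B) = ∅ for A ⊆ X, B ⊆ Y, then Cent_{X×Y}(A × B) = ∅. -/
open EMetric Set ENNReal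

lemma infEdist_prod' {X Y : Type*} [MetricSpace X] [MetricSpace Y] (a : X) (b : Y)
    (S : Set X) (T : Set Y) :
    infEdist (a,b) (S ×ˢ T) = infEdist a S ⊔ infEdist b T := by
  rw [infEdist, infEdist, infEdist, Metric.infEDist, Metric.infEDist, Metric.infEDist, biInf_sup_biInf]
  exact iInf_congr fun p => iInf_congr fun hp => (Prod.edist_eq _ _).symm

lemma infEdist_frontier_prod {X Y : Type*} [MetricSpace X] [MetricSpace Y] {a : X} {b : Y}
    {A : Set X} {B : Set Y} (ha : a ∈ A) (hb : b ∈ B) :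
    infEdist (a,b) (frontier (A ×ˢ B)) =
      infEdist a (frontier A) ⊓ infEdist b (frontier B) := by
  have hp := @infEdist_prod' X Y _ _
  simp only [infEdist] at hp ⊢
  rw [frontier_prod_eq, infEdist_union, hp, hp]
  rw [infEdist_zero_of_mem (subset_closure ha), infEdist_zero_of_mem (subset_closure hb)]
  simp [inf_comm]

theorem cent_prod_empty {X Y : Type*} [MetricSpace X] [MetricSpace Y]
    (A : Set X) (B : Set Y) (hA : cent A = ∅) (hB : cent B = ∅) :
    cent (A ×ˢ B) = ∅ := by
  ext ⟨a, b⟩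
  simp only [mem_empty_iff_false, iff_false]
  rintro ⟨⟨ha, hb⟩, hmax⟩
  -- a is not in cent A, so there is a' ∈ A strictly farther from the boundary
  have ha' : a ∉ cent A := by rw [hA]; exact notMem_empty a
  have hb' : b ∉ cent B := by rw [hB]; exact notMem_empty b
  simp only [cent, mem_setOf_eq, not_and, not_forall, not_le] at ha' hb'
  obtain ⟨a', ha'A, ha'lt⟩ := ha' ha
  obtain ⟨b', hb'B, hb'lt⟩ := hb' hb
  have h1 := hmax (a', b') ⟨ha'A, hb'B⟩
  rw [infEdist_frontier_prod ha hb, infEdist_frontier_prod ha'A hb'B] at h1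
  exact absurd h1 (not_le.mpr (lt_inf_iff.mpr
    ⟨lt_of_le_of_lt inf_le_left ha'lt, lt_of_le_of_lt inf_le_right hb'lt⟩))
end

section
/- Let A and B be separated subsets (closure(A) ∩ B = A ∩ closure(B) = ∅), neither clopen, of a metric space X with rad_X(A) > rad_X(B). Let Ã = {a ∈ Cent_X(A) | d(a, ∂B) < rad_X(A)}. If Cent_X(A) \ Ã ≠ ∅, then Cent_X(A ∪ B) = Cent_X(A) \ Ã and rad_X(A ∪ B) = rad_X(A). -/
open EMetric Set ENNReal

lemma rad_eq_of_mem_cent {X : Type*} [MetricSpace X] {A : Set X} {a : X} (ha : a ∈ cent A) :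
    rad A = EMetric.infEdist a (frontier A) := by
  refine le_antisymm (iInf₂_le a ha) (le_iInf₂ fun b hb => hb.2 a ha.1)

lemma frontier_subset_frontier_union {X : Type*} [MetricSpace X] {A B : Set X}
    (h1 : closure A ∩ B = ∅) (h2 : A ∩ closure B = ∅) :
    frontier A ⊆ frontier (A ∪ B) := by
  intro x hx
  refine ⟨closure_mono subset_union_left hx.1, fun hint => ?_⟩
  have hxB : x ∈ closure B := by
    rw [mem_closure_iff_nhds]
    intro U hU
    have hW : U ∩ interior (A ∪ B) ∈ nhds x :=
      Filter.inter_mem hU (isOpen_interior.mem_nhds hint)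
    have hns : ¬ (U ∩ interior (A ∪ B) ⊆ A) := fun h =>
      hx.2 (mem_interior_iff_mem_nhds.2 (Filter.mem_of_superset hW h))
    obtain ⟨y, hy, hyA⟩ := not_subset.1 hns
    exact ⟨y, hy.1, (interior_subset hy.2).resolve_left hyA⟩
  rcases interior_subset hint with hxA | hxB'
  · exact eq_empty_iff_forall_notMem.1 h2 x ⟨hxA, hxB⟩
  · exact eq_empty_iff_forall_notMem.1 h1 x ⟨hx.1, hxB'⟩

lemma frontier_union_of_sep {X : Type*} [MetricSpace X] {A B : Set X}
    (h1 : closure A ∩ B = ∅) (h2 : A ∩ closure B = ∅) :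
    frontier (A ∪ B) = frontier A ∪ frontier B := by
  refine Subset.antisymm ((frontier_union_subset A B).trans
    (union_subset_union inter_subset_left inter_subset_right)) ?_
  rintro x (hx | hx)
  · exact frontier_subset_frontier_union h1 h2 hx
  · rw [union_comm]
    refine frontier_subset_frontier_union ?_ ?_ hx
    · rw [← h2, inter_comm]
    · rw [← h1, inter_comm]

theorem cent_rad_union {X : Type*} [MetricSpace X] (A B : Set X)
    (hsep₁ : closure A ∩ B = ∅) (hsep₂ : A ∩ closure B = ∅)
    (hA : ¬ IsClopen A) (hB : ¬ IsClopen B)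
    (hrad : rad B < rad A)
    (At : Set X) (hAt : At = {a ∈ cent A | EMetric.infEdist a (frontier B) < rad A})
    (hne : (cent A \ At).Nonempty) :
    cent (A ∪ B) = cent A \ At ∧ rad (A ∪ B) = rad A := by
  obtain ⟨a₀, ha₀c, ha₀t⟩ := hne
  have hfU : frontier (A ∪ B) = frontier A ∪ frontier B := frontier_union_of_sep hsep₁ hsep₂
  -- distance to the union frontier splits as a min
  have hmin : ∀ y : X, EMetric.infEdist y (frontier (A ∪ B)) =
      EMetric.infEdist y (frontier A) ⊓ EMetric.infEdist y (frontier B) := by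
    intro y; rw [hfU]; exact infEdist_union
  set r := EMetric.infEdist a₀ (frontier A) with hr
  have hrA : rad A = r := rad_eq_of_mem_cent ha₀c
  -- cent B is nonempty
  have hcB : (cent B).Nonempty := by
    rw [nonempty_iff_ne_empty]
    intro h
    have : rad B = ⊤ := by simp [rad, h]
    exact absurd (this ▸ hrad) (by simp)
  obtain ⟨b₀, hb₀⟩ := hcB
  have hrB : rad B = EMetric.infEdist b₀ (frontier B) := rad_eq_of_mem_cent hb₀
  -- a₀ is far from frontier B
  have ha₀B : r ≤ EMetric.infEdist a₀ (frontier B) := by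
    by_contra h
    push_neg at h
    exact ha₀t (hAt ▸ ⟨ha₀c, hrA ▸ h⟩)
  have hfa₀ : EMetric.infEdist a₀ (frontier (A ∪ B)) = r := by
    rw [hmin]; exact inf_eq_left.2 ha₀B
  -- upper bound for every point of the union
  have hub : ∀ y ∈ A ∪ B, EMetric.infEdist y (frontier (A ∪ B)) ≤ r := by
    rintro y (hy | hy)
    · rw [hmin]; exact inf_le_left.trans (ha₀c.2 y hy)
    · rw [hmin]
      refine inf_le_right.trans (le_of_lt ?_)
      calc EMetric.infEdist y (frontier B) ≤ rad B := hrB ▸ hb₀.2 y hy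
        _ < rad A := hrad
        _ = r := hrA
  have hBlt : ∀ y ∈ B, EMetric.infEdist y (frontier (A ∪ B)) < r := by
    intro y hy
    rw [hmin]
    refine inf_le_right.trans_lt ?_
    calc EMetric.infEdist y (frontier B) ≤ rad B := hrB ▸ hb₀.2 y hy
      _ < rad A := hrad
      _ = r := hrA
  have hset : cent (A ∪ B) = cent A \ At := by
    ext x
    constructor
    · rintro ⟨hxU, hmax⟩
      have hrx : r ≤ EMetric.infEdist x (frontier (A ∪ B)) :=
        hfa₀ ▸ hmax a₀ (Or.inl ha₀c.1)
      have hxA : x ∈ A := by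
        rcases hxU with h | h
        · exact h
        · exact absurd hrx (not_le.2 (hBlt x h))
      rw [hmin] at hrx
      have h1 : r ≤ EMetric.infEdist x (frontier A) := le_trans hrx inf_le_left
      have h2 : r ≤ EMetric.infEdist x (frontier B) := le_trans hrx inf_le_right
      refine ⟨⟨hxA, fun b hb => (ha₀c.2 b hb).trans h1⟩, ?_⟩
      rw [hAt]
      rintro ⟨-, hlt⟩
      exact absurd hlt (not_lt.2 (hrA ▸ h2))
    · rintro ⟨hxc, hxt⟩
      have hdx : EMetric.infEdist x (frontier A) = r := by
        rw [← rad_eq_of_mem_cent hxc, hrA]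
      have hdxB : r ≤ EMetric.infEdist x (frontier B) := by
        by_contra h
        push_neg at h
        exact hxt (hAt ▸ ⟨hxc, hrA ▸ h⟩)
      have hfx : EMetric.infEdist x (frontier (A ∪ B)) = r := by
        rw [hmin, hdx]; exact inf_eq_left.2 hdxB
      exact ⟨Or.inl hxc.1, fun y hy => by rw [hfx]; exact hub y hy⟩
  refine ⟨hset, ?_⟩
  have ha₀U : a₀ ∈ cent (A ∪ B) := hset ▸ ⟨ha₀c, ha₀t⟩
  rw [rad_eq_of_mem_cent ha₀U, hfa₀, hrA]
end
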